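/- arXiv:1802.09279 — 8 statements merged into one kernel-verified Lean document; each statement's English description precedes it below -/
import Mathlib

section
/- Let b > 1 and M > ζ(b) be real numbers, let σ₁, σ₂, σ₃ > 0, δ > 0, c₀ ≥ 0 be real numbers, let ε ∈ ℂ with ε ≠ 0, and let H = {z ∈ ℂ : c ≤ Im z ≤ d, Re z ≤ 0} be a closed horizontal strip. Suppose (v_β)_{β≥0} is a sequence of functions v_β : ℂ → ℂ such that for all β ≥ 0 and all τ ∈ H, |v_β(τ)| ≤ c₀ |τ| exp((σ₁/|ε|) r_b(β) |τ| − σ₂ s_b(β) exp(σ₃ |τ|)) · β! · δ^{−β}. Then for every real number 0 < δ₁ < 1, every τ ∈ H and every z ∈ ℂ with |z| ≤ δ₁ δ, the series Σ_{β≥0} v_β(τ) z^β/β! converges absolutely and Σ_{β≥0} |v_β(τ)| |z|^β/β! ≤ (c₀/(1−δ₁)) |τ| exp((σ₁/|ε|) ζ(b) |τ| − σ₂ (M − ζ(b)) exp(σ₃ |τ|)). -/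
/-- `r_b(β) = Σ_{n=0}^{β} 1/(n+1)^b`. -/
noncomputable def rb (b : ℝ) (β : ℕ) : ℝ := ∑ n ∈ Finset.range (β + 1), 1 / ((n : ℝ) + 1) ^ b

/-- `ζ(b) = Σ_{n=0}^{∞} 1/(n+1)^b`. -/
noncomputable def zetab (b : ℝ) : ℝ := ∑' n : ℕ, 1 / ((n : ℝ) + 1) ^ b

/-- The closed horizontal strip `{z : c ≤ Im z ≤ d, Re z ≤ 0}`. -/
def strip (c d : ℝ) : Set ℂ := {z : ℂ | c ≤ z.im ∧ z.im ≤ d ∧ z.re ≤ 0}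

lemma summable_aux {b : ℝ} (hb : 1 < b) :
    Summable (fun n : ℕ => 1 / ((n : ℝ) + 1) ^ b) := by
  have h := Real.summable_one_div_nat_rpow.mpr hb
  have h2 := (summable_nat_add_iff 1).mpr h
  simpa [Nat.cast_add] using h2

lemma rb_le_zetab {b : ℝ} (hb : 1 < b) (β : ℕ) : rb b β ≤ zetab b := by
  refine Summable.sum_le_tsum (Finset.range (β + 1)) (fun i _ => ?_) (summable_aux hb)
  positivity

theorem stmt1 (b M : ℝ) (hb : 1 < b) (hM : zetab b < M)
    (σ₁ σ₂ σ₃ δ c₀ : ℝ) (hσ₁ : 0 < σ₁) (hσ₂ : 0 < σ₂) (hσ₃ : 0 < σ₃) (hδ : 0 < δ)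
    (hc₀ : 0 ≤ c₀) (ε : ℂ) (hε : ε ≠ 0) (c d : ℝ) (hcd : c < d)
    (v : ℕ → ℂ → ℂ)
    (hv : ∀ (β : ℕ), ∀ τ ∈ strip c d,
      ‖v β τ‖ ≤ c₀ * ‖τ‖ *
        Real.exp (σ₁ / ‖ε‖ * rb b β * ‖τ‖
          - σ₂ * (M - rb b β) * Real.exp (σ₃ * ‖τ‖)) * (β.factorial : ℝ) / δ ^ β) :
    ∀ δ₁ : ℝ, 0 < δ₁ → δ₁ < 1 → ∀ τ ∈ strip c d, ∀ z : ℂ, ‖z‖ ≤ δ₁ * δ →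
      Summable (fun β : ℕ => ‖v β τ‖ * ‖z‖ ^ β / (β.factorial : ℝ)) ∧
      ∑' β : ℕ, ‖v β τ‖ * ‖z‖ ^ β / (β.factorial : ℝ) ≤
        c₀ / (1 - δ₁) * ‖τ‖ *
          Real.exp (σ₁ / ‖ε‖ * zetab b * ‖τ‖
            - σ₂ * (M - zetab b) * Real.exp (σ₃ * ‖τ‖)) := by
  intro δ₁ h1 h2 τ hτ z hz
  set A := ‖τ‖ with hA
  have hA0 : 0 ≤ A := norm_nonneg τ
  set E := Real.exp (σ₁ / ‖ε‖ * zetab b * A - σ₂ * (M - zetab b) * Real.exp (σ₃ * A))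
    with hE
  have hE0 : 0 ≤ E := Real.exp_nonneg _
  have hεpos : 0 < ‖ε‖ := by
    simpa [norm_pos_iff] using hε
  have key : ∀ β : ℕ,
      ‖v β τ‖ * ‖z‖ ^ β / (β.factorial : ℝ) ≤ c₀ * A * E * δ₁ ^ β := by
    intro β
    have hrb := rb_le_zetab hb β
    have hEle : Real.exp (σ₁ / ‖ε‖ * rb b β * A
        - σ₂ * (M - rb b β) * Real.exp (σ₃ * A)) ≤ E := by
      rw [hE]
      apply Real.exp_le_exp.mpr
      have h3 : σ₁ / ‖ε‖ * rb b β * A ≤ σ₁ / ‖ε‖ * zetab b * A := by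
        apply mul_le_mul_of_nonneg_right _ hA0
        exact mul_le_mul_of_nonneg_left hrb (le_of_lt (div_pos hσ₁ hεpos))
      have h4 : σ₂ * (M - zetab b) * Real.exp (σ₃ * A)
          ≤ σ₂ * (M - rb b β) * Real.exp (σ₃ * A) := by
        apply mul_le_mul_of_nonneg_right _ (Real.exp_nonneg _)
        apply mul_le_mul_of_nonneg_left _ hσ₂.le
        linarith
      linarith
    have hz' : ‖z‖ ^ β ≤ (δ₁ * δ) ^ β :=
      pow_le_pow_left₀ (norm_nonneg z) hz β
    have hv' := hv β τ hτ
    have hfac : (0:ℝ) < (β.factorial : ℝ) := by exact_mod_cast β.factorial_pos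
    calc ‖v β τ‖ * ‖z‖ ^ β / (β.factorial : ℝ)
        ≤ (c₀ * A * Real.exp (σ₁ / ‖ε‖ * rb b β * A
            - σ₂ * (M - rb b β) * Real.exp (σ₃ * A)) * (β.factorial : ℝ) / δ ^ β)
            * (δ₁ * δ) ^ β / (β.factorial : ℝ) := by
          apply div_le_div_of_nonneg_right _ hfac.le
          apply mul_le_mul hv' hz' (by positivity) _
          have : (0:ℝ) ≤ c₀ * A * Real.exp (σ₁ / ‖ε‖ * rb b β * A
              - σ₂ * (M - rb b β) * Real.exp (σ₃ * A)) := by positivity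
          positivity
      _ = c₀ * A * Real.exp (σ₁ / ‖ε‖ * rb b β * A
            - σ₂ * (M - rb b β) * Real.exp (σ₃ * A)) * δ₁ ^ β := by
          field_simp
          ring
      _ ≤ c₀ * A * E * δ₁ ^ β := by
          apply mul_le_mul_of_nonneg_right _ (by positivity)
          exact mul_le_mul_of_nonneg_left hEle (by positivity)
  have hgeo : Summable (fun β : ℕ => c₀ * A * E * δ₁ ^ β) :=
    (summable_geometric_of_lt_one h1.le h2).mul_left _
  have hsum : Summable (fun β : ℕ =>
      ‖v β τ‖ * ‖z‖ ^ β / (β.factorial : ℝ)) := by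
    apply Summable.of_nonneg_of_le (fun β => by positivity) key hgeo
  refine ⟨hsum, ?_⟩
  calc ∑' β : ℕ, ‖v β τ‖ * ‖z‖ ^ β / (β.factorial : ℝ)
      ≤ ∑' β : ℕ, c₀ * A * E * δ₁ ^ β := Summable.tsum_le_tsum key hsum hgeo
    _ = c₀ * A * E * (1 - δ₁)⁻¹ := by
        rw [tsum_mul_left, tsum_geometric_of_lt_one h1.le h2]
    _ = c₀ / (1 - δ₁) * A * E := by ring
end

section
/- Let b > 1 and M > ζ(b) be real numbers, σ₁, σ₂, σ₃ > 0 real numbers, k₀, k₂ ≥ 0 and k₁ ≥ 1 integers, and let H = {z ∈ ℂ : c ≤ Im z ≤ d, Re z ≤ 0} be a closed horizontal strip. Then there exists a constant C > 0, depending only on k₀, k₁, k₂, σ₁, σ₂, σ₃ and b (independent of ε, β and v), such that for every ε ∈ ℂ with ε ≠ 0, every integer β ≥ k₁, every real N ≥ 0 and every function v : ℂ → ℂ satisfying |v(τ)| ≤ N |τ| exp((σ₁/|ε|) r_b(β−k₁) |τ| − σ₂ s_b(β−k₁) exp(σ₃ |τ|)) for all τ ∈ H, one has |τ^{k₀} exp(−k₂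 τ) v(τ)| ≤ C |ε|^{k₀} (β+1)^{b k₀ + k₂ b/σ₃} N |τ| exp((σ₁/|ε|) r_b(β) |τ| − σ₂ s_b(β) exp(σ₃ |τ|)) for all τ ∈ H. -/
lemma aux_pow (n : ℕ) {a x : ℝ} (ha : 0 < a) (hx : 0 ≤ x) :
    x ^ n ≤ ((n : ℝ) / a) ^ n * Real.exp (a * x) := by
  rcases Nat.eq_zero_or_pos n with h | h
  · subst h; simpa using Real.one_le_exp (by positivity)
  · have hn : (0:ℝ) < n := by exact_mod_cast h
    have h2 : a * x / n ≤ Real.exp (a * x / n) := by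
      have := Real.add_one_le_exp (a * x / n); linarith
    have h1 : x ≤ (n / a) * Real.exp (a * x / n) := by
      calc x = (n / a) * (a * x / n) := by field_simp
        _ ≤ (n / a) * Real.exp (a * x / n) :=
            mul_le_mul_of_nonneg_left h2 (by positivity)
    calc x ^ n ≤ ((n / a) * Real.exp (a * x / n)) ^ n := pow_le_pow_left₀ hx h1 n
      _ = ((n:ℝ) / a) ^ n * Real.exp (a * x / n) ^ n := mul_pow _ _ _
      _ = ((n:ℝ) / a) ^ n * Real.exp (a * x) := by
          rw [← Real.exp_nat_mul]
          congr 2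
          field_simp

lemma aux_rpow {p : ℝ} (hp : 0 ≤ p) {a x : ℝ} (ha : 0 < a) (hx : 0 ≤ x) :
    x ^ p ≤ (p / a) ^ p * Real.exp (a * x) := by
  rcases eq_or_lt_of_le hp with h | h
  · simp [← h]; positivity
  · have h2 : a * x / p ≤ Real.exp (a * x / p) := by
      have := Real.add_one_le_exp (a * x / p); linarith
    have h1 : x ≤ (p / a) * Real.exp (a * x / p) := by
      calc x = (p / a) * (a * x / p) := by field_simp
        _ ≤ (p / a) * Real.exp (a * x / p) :=
            mul_le_mul_of_nonneg_left h2 (by positivity)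
    calc x ^ p ≤ ((p / a) * Real.exp (a * x / p)) ^ p :=
          Real.rpow_le_rpow hx h1 hp
      _ = (p / a) ^ p * Real.exp (a * x / p) ^ p :=
          Real.mul_rpow (by positivity) (Real.exp_nonneg _)
      _ = (p / a) ^ p * Real.exp (a * x) := by
          rw [← Real.exp_mul]
          congr 2
          field_simp

lemma rb_mono (b : ℝ) : Monotone (rb b) := by
  intro m n h
  apply Finset.sum_le_sum_of_subset_of_nonneg (Finset.range_subset_range.2 (by omega))
  intro i _ _; positivity

lemma rb_gap (b : ℝ) {k₁ β : ℕ} (hk : 1 ≤ k₁) (hβ : k₁ ≤ β) :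
    rb b (β - k₁) + 1 / ((β:ℝ)+1)^b ≤ rb b β := by
  have h1 : rb b β = rb b (β-1) + 1/((β:ℝ)+1)^b := by
    unfold rb
    have h : β - 1 + 1 = β := by omega
    rw [h, Finset.sum_range_succ]
  rw [h1]
  have := rb_mono b (show β - k₁ ≤ β - 1 by omega)
  linarith

/-- The constant `C` depends only on `k₀, k₁, k₂, σ₁, σ₂, σ₃, b`; it is independent of
`M`, the strip, `ε`, `β` and `v`. -/
theorem stmt4 (b : ℝ) (hb : 1 < b)
    (σ₁ σ₂ σ₃ : ℝ) (hσ₁ : 0 < σ₁) (hσ₂ : 0 < σ₂) (hσ₃ : 0 < σ₃)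
    (k₀ k₁ k₂ : ℕ) (hk₁ : 1 ≤ k₁) :
    ∃ C : ℝ, 0 < C ∧ ∀ M : ℝ, zetab b < M → ∀ c d : ℝ, c < d →
      ∀ (ε : ℂ), ε ≠ 0 → ∀ β : ℕ, k₁ ≤ β → ∀ N : ℝ, 0 ≤ N →
      ∀ v : ℂ → ℂ,
        (∀ τ ∈ strip c d, ‖v τ‖ ≤ N * ‖τ‖ *
          Real.exp (σ₁ / ‖ε‖ * rb b (β - k₁) * ‖τ‖
            - σ₂ * (M - rb b (β - k₁)) * Real.exp (σ₃ * ‖τ‖))) →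
        ∀ τ ∈ strip c d,
          ‖τ ^ k₀ * Complex.exp (-(k₂ : ℂ) * τ) * v τ‖ ≤
            C * ‖ε‖ ^ k₀ *
              ((β : ℝ) + 1) ^ (b * (k₀ : ℝ) + (k₂ : ℝ) * b / σ₃) *
              N * ‖τ‖ *
              Real.exp (σ₁ / ‖ε‖ * rb b β * ‖τ‖
                - σ₂ * (M - rb b β) * Real.exp (σ₃ * ‖τ‖)) := by
  set p : ℝ := (k₂ : ℝ) / σ₃ with hpdef
  have hp0 : 0 ≤ p := by positivity
  set A : ℝ := max 1 ((k₀:ℝ)/σ₁) with hAdef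
  set B : ℝ := max 1 (p/σ₂) with hBdef
  have hA1 : (1:ℝ) ≤ A := le_max_left _ _
  have hB1 : (1:ℝ) ≤ B := le_max_left _ _
  have hA0 : (0:ℝ) < A := lt_of_lt_of_le one_pos hA1
  have hB0 : (0:ℝ) < B := lt_of_lt_of_le one_pos hB1
  refine ⟨A ^ k₀ * B ^ p, mul_pos (pow_pos hA0 _) (Real.rpow_pos_of_pos hB0 p), ?_⟩
  intro M hM c d hcd ε hε β hβ N hN v hv τ hτ
  have hx : (0:ℝ) ≤ ‖τ‖ := norm_nonneg τ
  set x := ‖τ‖ with hxdef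
  set e := ‖ε‖ with hedef
  have he : (0:ℝ) < e := norm_pos_iff.mpr hε
  set δ : ℝ := rb b β - rb b (β - k₁) with hδdef
  have hβ1 : (0:ℝ) < (β:ℝ) + 1 := by positivity
  have hβb : (0:ℝ) < ((β:ℝ) + 1) ^ b := Real.rpow_pos_of_pos hβ1 b
  have hgap : 1 / ((β:ℝ)+1)^b ≤ δ := by
    have := rb_gap b hk₁ hβ
    rw [hδdef]; linarith
  have hδ0 : (0:ℝ) < δ := lt_of_lt_of_le (by positivity) hgap
  have hinv : 1/δ ≤ ((β:ℝ)+1)^b := by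
    rw [div_le_iff₀ hδ0]
    have h1 : 1 ≤ δ * ((β:ℝ)+1)^b := by
      rw [div_le_iff₀ hβb] at hgap; linarith
    linarith [h1]
  set E : ℝ := Real.exp (σ₃ * x) with hEdef
  have hE0 : (0:ℝ) ≤ E := Real.exp_nonneg _
  set R1 : ℝ := σ₁ / e * rb b (β - k₁) * x - σ₂ * (M - rb b (β - k₁)) * E with hR1def
  set R2 : ℝ := σ₁ / e * rb b β * x - σ₂ * (M - rb b β) * E with hR2def
  -- Bound 1
  have ha1 : (0:ℝ) < σ₁ * δ / e := by positivity
  have hb1 : x ^ k₀ ≤ (A * e * ((β:ℝ)+1)^b) ^ k₀ * Real.exp (σ₁ * δ / e * x) := by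
    refine le_trans (aux_pow k₀ ha1 hx) ?_
    apply mul_le_mul_of_nonneg_right _ (Real.exp_nonneg _)
    apply pow_le_pow_left₀ (by positivity)
    have heq : (k₀:ℝ) / (σ₁ * δ / e) = (k₀/σ₁) * e * (1/δ) := by
      field_simp
    rw [heq]
    apply mul_le_mul _ hinv (by positivity) (by positivity)
    exact mul_le_mul_of_nonneg_right (le_max_right _ _) he.le
  -- Bound 2
  have hEp : Real.exp ((k₂:ℝ) * x) = E ^ p := by
    rw [hEdef, ← Real.exp_mul]
    congr 1
    rw [hpdef]
    field_simp
  have hb2 : E ^ p ≤ (B * ((β:ℝ)+1)^b) ^ p * Real.exp (σ₂ * δ * E) := by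
    refine le_trans (aux_rpow hp0 (mul_pos hσ₂ hδ0) hE0) ?_
    apply mul_le_mul_of_nonneg_right _ (Real.exp_nonneg _)
    apply Real.rpow_le_rpow (by positivity) _ hp0
    have heq : p / (σ₂ * δ) = (p/σ₂) * (1/δ) := by field_simp
    rw [heq]
    exact mul_le_mul (le_max_right _ _) hinv (by positivity) hB0.le
  -- exp splitting
  have hexp : Real.exp R2 = Real.exp R1 * Real.exp (σ₁ * δ / e * x) * Real.exp (σ₂ * δ * E) := by
    rw [← Real.exp_add, ← Real.exp_add]
    congr 1
    rw [hR1def, hR2def, hδdef]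
    ring
  -- constant algebra
  have hconst : (A * e * ((β:ℝ)+1)^b) ^ k₀ * (B * ((β:ℝ)+1)^b) ^ p
      = A ^ k₀ * B ^ p * e ^ k₀ * ((β:ℝ)+1) ^ (b * (k₀:ℝ) + (k₂:ℝ) * b / σ₃) := by
    have h1 : (((β:ℝ)+1)^b) ^ k₀ = ((β:ℝ)+1) ^ (b * (k₀:ℝ)) := by
      rw [← Real.rpow_natCast (((β:ℝ)+1)^b) k₀, ← Real.rpow_mul hβ1.le]
    have h2 : (((β:ℝ)+1)^b) ^ p = ((β:ℝ)+1) ^ (b * p) := by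
      rw [← Real.rpow_mul hβ1.le]
    have h3 : (B * ((β:ℝ)+1)^b) ^ p = B ^ p * (((β:ℝ)+1)^b) ^ p :=
      Real.mul_rpow hB0.le hβb.le
    rw [mul_pow, mul_pow, h3, h1, h2,
      show b * (k₀:ℝ) + (k₂:ℝ) * b / σ₃ = b * (k₀:ℝ) + b * p by rw [hpdef]; ring,
      Real.rpow_add hβ1]
    ring
  -- key inequality
  have key : x ^ k₀ * Real.exp ((k₂:ℝ) * x) * Real.exp R1 ≤
      A ^ k₀ * B ^ p * e ^ k₀ * ((β:ℝ)+1) ^ (b * (k₀:ℝ) + (k₂:ℝ) * b / σ₃) * Real.exp R2 := by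
    rw [hEp, hexp, ← hconst]
    calc x ^ k₀ * E ^ p * Real.exp R1
        ≤ ((A * e * ((β:ℝ)+1)^b) ^ k₀ * Real.exp (σ₁ * δ / e * x)) *
          ((B * ((β:ℝ)+1)^b) ^ p * Real.exp (σ₂ * δ * E)) * Real.exp R1 := by
          apply mul_le_mul_of_nonneg_right _ (Real.exp_nonneg _)
          exact mul_le_mul hb1 hb2 (Real.rpow_nonneg hE0 p) (by positivity)
      _ = (A * e * ((β:ℝ)+1)^b) ^ k₀ * (B * ((β:ℝ)+1)^b) ^ p *
          (Real.exp R1 * Real.exp (σ₁ * δ / e * x) * Real.exp (σ₂ * δ * E)) := by ring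
  -- assemble
  have habs : ‖τ ^ k₀ * Complex.exp (-(k₂ : ℂ) * τ) * v τ‖
      = x ^ k₀ * Real.exp (-((k₂:ℝ) * τ.re)) * ‖v τ‖ := by
    rw [norm_mul, norm_mul, norm_pow, Complex.norm_exp]
    congr 3
    simp
  have hre : Real.exp (-((k₂:ℝ) * τ.re)) ≤ Real.exp ((k₂:ℝ) * x) := by
    apply Real.exp_le_exp.2
    have h2 : -τ.re ≤ x := neg_le.mp (abs_le.1 (Complex.abs_re_le_norm τ)).1
    calc -((k₂:ℝ) * τ.re) = (k₂:ℝ) * (-τ.re) := by ring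
      _ ≤ (k₂:ℝ) * x := mul_le_mul_of_nonneg_left h2 (Nat.cast_nonneg _)
  have hv' := hv τ hτ
  calc ‖τ ^ k₀ * Complex.exp (-(k₂ : ℂ) * τ) * v τ‖
      = x ^ k₀ * Real.exp (-((k₂:ℝ) * τ.re)) * ‖v τ‖ := habs
    _ ≤ x ^ k₀ * Real.exp ((k₂:ℝ) * x) * (N * x * Real.exp R1) := by
        apply mul_le_mul _ hv' (norm_nonneg _) (by positivity)
        exact mul_le_mul_of_nonneg_left hre (by positivity)
    _ = (x ^ k₀ * Real.exp ((k₂:ℝ) * x) * Real.exp R1) * (N * x) := by ring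
    _ ≤ (A ^ k₀ * B ^ p * e ^ k₀ * ((β:ℝ)+1) ^ (b * (k₀:ℝ) + (k₂:ℝ) * b / σ₃) * Real.exp R2) * (N * x) :=
        mul_le_mul_of_nonneg_right key (by positivity)
    _ = A ^ k₀ * B ^ p * e ^ k₀ * ((β:ℝ)+1) ^ (b * (k₀:ℝ) + (k₂:ℝ) * b / σ₃) * N * x * Real.exp R2 := by ring
end

section
/- Let b > 1 be a real number, σ₁, ς₂, ς₃ > 0 real numbers, k₀, k₂ ≥ 0 and k₁ ≥ 1 integers, and let J = {z ∈ ℂ : c ≤ Im z ≤ d, Re z ≤ 0} be a closed horizontal strip. Then there exists a constant C > 0, depending only on k₀, k₁, k₂, σ₁, ς₂, ς₃ and b (independent of ε, β and v), such that for every ε ∈ ℂ with ε ≠ 0, every integer β ≥ k₁, every real N ≥ 0 and every function v : ℂ → ℂ satisfying |v(τ)| ≤ N |τ| exp((σ₁/|ε|) r_b(β−k₁) |τ| + ς₂ r_b(β−k₁) exp(ς₃ |τ|)) for all τ ∈ J, one has |τ^{k₀} exp(−k₂ τ) v(τ)| ≤ C |ε|^{k₀} (β+1)^{b k₀ + k₂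 b/ς₃} N |τ| exp((σ₁/|ε|) r_b(β) |τ| + ς₂ r_b(β) exp(ς₃ |τ|)) for all τ ∈ J. -/
lemma pow_le_fact_mul_exp {x : ℝ} (hx : 0 ≤ x) (n : ℕ) :
    x ^ n ≤ (n.factorial : ℝ) * Real.exp x := by
  have h := Real.pow_div_factorial_le_exp x hx n
  have hf : (0:ℝ) < (n.factorial : ℝ) := by positivity
  rw [div_le_iff₀ hf] at h
  rw [mul_comm]
  exact h

lemma rpow_le_one_add_pow {x : ℝ} (hx : 0 ≤ x) {p : ℝ} (hp : 0 ≤ p) {n : ℕ} (hpn : p ≤ n) :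
    x ^ p ≤ 1 + x ^ n := by
  rcases le_total x 1 with h | h
  · have h1 : x ^ p ≤ 1 := Real.rpow_le_one hx h hp
    have h2 : (0:ℝ) ≤ x ^ n := pow_nonneg hx n
    linarith
  · have h1 : x ^ p ≤ x ^ (n:ℝ) := Real.rpow_le_rpow_of_exponent_le h hpn
    rw [Real.rpow_natCast] at h1
    linarith

set_option maxHeartbeats 1000000 in
/-- The constant `C` depends only on `k₀, k₁, k₂, σ₁, ς₂, ς₃, b`; it is independent of
the strip, `ε`, `β` and `v`. -/
theorem stmt6 (b : ℝ) (hb : 1 < b)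
    (σ₁ ς₂ ς₃ : ℝ) (hσ₁ : 0 < σ₁) (hς₂ : 0 < ς₂) (hς₃ : 0 < ς₃)
    (k₀ k₁ k₂ : ℕ) (hk₁ : 1 ≤ k₁) :
    ∃ C : ℝ, 0 < C ∧ ∀ c d : ℝ, c < d →
      ∀ (ε : ℂ), ε ≠ 0 → ∀ β : ℕ, k₁ ≤ β → ∀ N : ℝ, 0 ≤ N →
      ∀ v : ℂ → ℂ,
        (∀ τ ∈ strip c d, ‖v τ‖ ≤ N * ‖τ‖ *
          Real.exp (σ₁ / ‖ε‖ * rb b (β - k₁) * ‖τ‖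
            + ς₂ * rb b (β - k₁) * Real.exp (ς₃ * ‖τ‖))) →
        ∀ τ ∈ strip c d,
          ‖τ ^ k₀ * Complex.exp (-(k₂ : ℂ) * τ) * v τ‖ ≤
            C * ‖ε‖ ^ k₀ *
              ((β : ℝ) + 1) ^ (b * (k₀ : ℝ) + (k₂ : ℝ) * b / ς₃) *
              N * ‖τ‖ *
              Real.exp (σ₁ / ‖ε‖ * rb b β * ‖τ‖
                + ς₂ * rb b β * Real.exp (ς₃ * ‖τ‖)) := by
  set p : ℝ := (k₂ : ℝ) / ς₃ with hp
  have hp0 : 0 ≤ p := by positivity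
  set n : ℕ := ⌈p⌉₊ with hn
  set F : ℝ := (n.factorial : ℝ) / ς₂ ^ n with hF
  have hF0 : 0 ≤ F := by positivity
  refine ⟨(k₀.factorial : ℝ) / σ₁ ^ k₀ * (1 + F), by positivity, ?_⟩
  intro c d hcd ε hε β hβ N hN v hv τ hτ
  have he : 0 < ‖ε‖ := norm_pos_iff.mpr hε
  set e := ‖ε‖ with hedef
  set t := ‖τ‖ with htdef
  have ht0 : 0 ≤ t := norm_nonneg _
  have hβ1 : (0:ℝ) < (β:ℝ) + 1 := by positivity
  set P : ℝ := ((β:ℝ) + 1) ^ b with hPdef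
  have hP : 0 < P := Real.rpow_pos_of_pos hβ1 b
  set E := Real.exp (ς₃ * t) with hEdef
  have hE0 : 0 < E := Real.exp_pos _
  have hE1 : 1 ≤ E := Real.one_le_exp (by positivity)
  -- the key inequality on rb
  have rb_mono : ∀ m k : ℕ, m ≤ k → rb b m ≤ rb b k := by
    intro m k hmk
    exact Finset.sum_le_sum_of_subset_of_nonneg
      (Finset.range_subset_range.2 (by omega)) (fun i _ _ => by positivity)
  have hrb : rb b (β - k₁) + 1 / P ≤ rb b β := by
    obtain ⟨γ, rfl⟩ : ∃ γ, β = γ + 1 :=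
      ⟨β - 1, (Nat.succ_pred_eq_of_pos (lt_of_lt_of_le hk₁ hβ)).symm⟩
    have h1 : rb b (γ + 1) = rb b γ + 1 / P := by
      rw [hPdef]; unfold rb
      rw [Finset.sum_range_succ]
      try push_cast
      try ring
    rw [h1]
    have h2 := rb_mono (γ + 1 - k₁) γ (by omega)
    linarith
  -- bound for t ^ k₀
  set a : ℝ := σ₁ / (e * P) with hadef
  have ha : 0 < a := by positivity
  have hb1 : t ^ k₀ ≤ (k₀.factorial : ℝ) / σ₁ ^ k₀ * (e * P) ^ k₀ * Real.exp (a * t) := by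
    have h : (a * t) ^ k₀ ≤ (k₀.factorial : ℝ) * Real.exp (a * t) :=
      pow_le_fact_mul_exp (by positivity) k₀
    have key : (k₀.factorial : ℝ) / σ₁ ^ k₀ * (e * P) ^ k₀ = (k₀.factorial : ℝ) / a ^ k₀ := by
      rw [hadef, div_pow]
      rw [div_div_eq_mul_div]
      field_simp
    rw [key, div_mul_eq_mul_div, le_div_iff₀ (pow_pos ha k₀)]
    calc t ^ k₀ * a ^ k₀ = (a * t) ^ k₀ := by rw [mul_pow]; ring
      _ ≤ _ := h
  -- bound for exp (k₂ * t)
  set x : ℝ := E / P with hxdef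
  have hx0 : 0 ≤ x := by positivity
  have hb2 : Real.exp ((k₂:ℝ) * t) ≤
      (1 + F) * ((β:ℝ) + 1) ^ (b * p) * Real.exp (ς₂ * x) := by
    have hEp : E ^ p = Real.exp ((k₂:ℝ) * t) := by
      rw [hEdef, ← Real.exp_mul]
      congr 1
      rw [hp]
      field_simp
    have hsplit : E ^ p = ((β:ℝ) + 1) ^ (b * p) * x ^ p := by
      have hEPx : E = P * x := by rw [hxdef]; field_simp
      rw [hEPx, Real.mul_rpow hP.le hx0, Real.rpow_mul hβ1.le, ← hPdef]
    have h1 : x ^ p ≤ 1 + x ^ n := rpow_le_one_add_pow hx0 hp0 (Nat.le_ceil p)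
    have h2 : x ^ n ≤ F * Real.exp (ς₂ * x) := by
      have h := pow_le_fact_mul_exp (by positivity : (0:ℝ) ≤ ς₂ * x) n
      rw [mul_pow] at h
      rw [hF, div_mul_eq_mul_div, le_div_iff₀ (pow_pos hς₂ n)]
      calc x ^ n * ς₂ ^ n = ς₂ ^ n * x ^ n := by ring
        _ ≤ _ := h
    have h3 : (1:ℝ) ≤ Real.exp (ς₂ * x) := Real.one_le_exp (by positivity)
    have h4 : x ^ p ≤ (1 + F) * Real.exp (ς₂ * x) := by
      calc x ^ p ≤ 1 + x ^ n := h1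
        _ ≤ Real.exp (ς₂ * x) + F * Real.exp (ς₂ * x) := by
            exact add_le_add h3 h2
        _ = (1 + F) * Real.exp (ς₂ * x) := by ring
    calc Real.exp ((k₂:ℝ) * t) = ((β:ℝ) + 1) ^ (b * p) * x ^ p := by rw [← hEp, hsplit]
      _ ≤ ((β:ℝ) + 1) ^ (b * p) * ((1 + F) * Real.exp (ς₂ * x)) := by
          have hQ : (0:ℝ) ≤ ((β:ℝ) + 1) ^ (b * p) := (Real.rpow_pos_of_pos hβ1 _).le
          exact mul_le_mul_of_nonneg_left h4 hQ
      _ = (1 + F) * ((β:ℝ) + 1) ^ (b * p) * Real.exp (ς₂ * x) := by ring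
  -- rewrite the left-hand side
  have hL : ‖τ ^ k₀ * Complex.exp (-(k₂:ℂ) * τ) * v τ‖
      = t ^ k₀ * Real.exp ((k₂:ℝ) * (-τ.re)) * ‖v τ‖ := by
    rw [norm_mul, norm_mul, norm_pow, Complex.norm_exp]
    congr 2
    simp [Complex.mul_re]
    try ring
  -- bound on exp ((k₂:ℝ)*(-τ.re))
  have hre : Real.exp ((k₂:ℝ) * (-τ.re)) ≤ Real.exp ((k₂:ℝ) * t) := by
    apply Real.exp_le_exp.2
    have h1 : -τ.re ≤ |τ.re| := neg_le_abs _
    have h2 : |τ.re| ≤ t := Complex.abs_re_le_norm τ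
    have h3 : (0:ℝ) ≤ (k₂:ℝ) := Nat.cast_nonneg _
    nlinarith
  set A : ℝ := σ₁ / e * rb b (β - k₁) * t + ς₂ * rb b (β - k₁) * E with hA
  have hvτ : ‖v τ‖ ≤ N * t * Real.exp A := hv τ hτ
  -- exponent inequality
  have hexp : a * t + ς₂ * x + A ≤ σ₁ / e * rb b β * t + ς₂ * rb b β * E := by
    have e1 : a * t = σ₁ / e * t * (1 / P) := by rw [hadef]; field_simp; try ring
    have e2 : ς₂ * x = ς₂ * E * (1 / P) := by rw [hxdef]; ring
    have p1 : (0:ℝ) ≤ σ₁ / e * t := by positivity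
    have p2 : (0:ℝ) ≤ ς₂ * E := by positivity
    rw [hA, e1, e2]
    nlinarith [mul_le_mul_of_nonneg_left hrb p1, mul_le_mul_of_nonneg_left hrb p2]
  have hrbb' : 0 ≤ rb b (β - k₁) := by
    unfold rb; exact Finset.sum_nonneg fun i _ => by positivity
  have hexppos : (0:ℝ) < Real.exp A := Real.exp_pos _
  clear_value A
  calc ‖τ ^ k₀ * Complex.exp (-(k₂:ℂ) * τ) * v τ‖
      = t ^ k₀ * Real.exp ((k₂:ℝ) * (-τ.re)) * ‖v τ‖ := hL
    _ ≤ t ^ k₀ * Real.exp ((k₂:ℝ) * t) * (N * t * Real.exp A) := by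
        apply mul_le_mul
        · exact mul_le_mul_of_nonneg_left hre (pow_nonneg ht0 k₀)
        · exact hvτ
        · exact norm_nonneg _
        · positivity
    _ ≤ ((k₀.factorial : ℝ) / σ₁ ^ k₀ * (e * P) ^ k₀ * Real.exp (a * t)) *
          ((1 + F) * ((β:ℝ) + 1) ^ (b * p) * Real.exp (ς₂ * x)) * (N * t * Real.exp A) := by
        apply mul_le_mul_of_nonneg_right _ (by positivity)
        apply mul_le_mul hb1 hb2 (Real.exp_pos _).le (by positivity)
    _ = (k₀.factorial : ℝ) / σ₁ ^ k₀ * (1 + F) * e ^ k₀ *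
          (((β:ℝ) + 1) ^ (b * (k₀:ℝ)) * ((β:ℝ) + 1) ^ (b * p)) * N * t *
          Real.exp (a * t + ς₂ * x + A) := by
        rw [Real.exp_add, Real.exp_add, mul_pow]
        rw [show P ^ k₀ = ((β:ℝ) + 1) ^ (b * (k₀:ℝ)) by
          rw [hPdef, Real.rpow_mul hβ1.le, Real.rpow_natCast]]
        ring
    _ ≤ (k₀.factorial : ℝ) / σ₁ ^ k₀ * (1 + F) * e ^ k₀ *
          ((β:ℝ) + 1) ^ (b * (k₀:ℝ) + (k₂:ℝ) * b / ς₃) * N * t *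
          Real.exp (σ₁ / e * rb b β * t + ς₂ * rb b β * E) := by
        rw [← Real.rpow_add hβ1, show b * (k₀:ℝ) + b * p = b * (k₀:ℝ) + (k₂:ℝ) * b / ς₃ by
          rw [hp]; ring]
        apply mul_le_mul_of_nonneg_left (Real.exp_le_exp.2 hexp)
        positivity
end

section
/- Let b > 1 and σ₁ > 0 and r > 0 be real numbers, let k₀, k₂ ≥ 0 and k₁ ≥ 1 be integers, and let Ω ⊆ ℂ be a set contained in the union {z ∈ ℂ : Re z ≥ 0} ∪ {z ∈ ℂ : |z| ≤ r} (for instance the closure of an unbounded sector contained in the open right half-plane, union the closed disc of radius r about 0). Then there exists a constant C > 0, depending only on k₀, k₁, k₂, σ₁, r and b (independent of ε, β and v), such that for every ε ∈ ℂ with ε ≠ 0, every integer β ≥ k₁, every real N ≥ 0 and every function v : ℂ → ℂ satisfying |v(τ)| ≤ N |τ| exp((σ₁/|ε|) r_b(β−k₁) |τ|) for all τ ∈ Ω, one has |τ^{k₀} exp(−k₂ τ) v(τ)| ≤ C |ε|^{k₀} (β+1)^{b k₀} N |τ| exp((σ₁/|ε|) r_b(β) |τ|) for all τ ∈ Ω.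 -/
lemma pow_le_factorial_mul_exp {x : ℝ} (hx : 0 ≤ x) (k : ℕ) :
    x ^ k ≤ k.factorial * Real.exp x := by
  have h := Real.sum_le_exp_of_nonneg hx (k + 1)
  have h2 : x ^ k / k.factorial ≤ Real.exp x := by
    refine le_trans ?_ h
    have := Finset.single_le_sum (f := fun i => x ^ i / (i.factorial : ℝ))
      (fun i _ => by positivity) (Finset.self_mem_range_succ k)
    simpa using this
  have hk : (0:ℝ) < k.factorial := by positivity
  calc x ^ k = (x ^ k / k.factorial) * k.factorial := by field_simp
    _ ≤ Real.exp x * k.factorial := by gcongr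
    _ = k.factorial * Real.exp x := by ring

/-- The constant `C` depends only on `k₀, k₁, k₂, σ₁, r, b`; it is independent of the
domain `Ω`, of `ε`, `β` and `v`. -/
theorem stmt7 (b σ₁ r : ℝ) (hb : 1 < b) (hσ₁ : 0 < σ₁) (hr : 0 < r)
    (k₀ k₁ k₂ : ℕ) (hk₁ : 1 ≤ k₁) :
    ∃ C : ℝ, 0 < C ∧ ∀ Ω : Set ℂ,
      Ω ⊆ {z : ℂ | 0 ≤ z.re} ∪ {z : ℂ | ‖z‖ ≤ r} →
      ∀ (ε : ℂ), ε ≠ 0 → ∀ β : ℕ, k₁ ≤ β → ∀ N : ℝ, 0 ≤ N →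
      ∀ v : ℂ → ℂ,
        (∀ τ ∈ Ω, ‖v τ‖ ≤ N * ‖τ‖ *
          Real.exp (σ₁ / ‖ε‖ * rb b (β - k₁) * ‖τ‖)) →
        ∀ τ ∈ Ω,
          ‖τ ^ k₀ * Complex.exp (-(k₂ : ℂ) * τ) * v τ‖ ≤
            C * ‖ε‖ ^ k₀ * ((β : ℝ) + 1) ^ (b * (k₀ : ℝ)) *
              N * ‖τ‖ *
              Real.exp (σ₁ / ‖ε‖ * rb b β * ‖τ‖) := by
  refine ⟨(k₀.factorial / σ₁ ^ k₀) * Real.exp (k₂ * r), by positivity, ?_⟩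
  intro Ω hΩ ε hε β hβ N hN v hv τ hτ
  set a := ‖τ‖ with ha
  set e := ‖ε‖ with he
  have he0 : 0 < e := by simpa [he] using norm_pos_iff.2 hε
  have ha0 : 0 ≤ a := norm_nonneg τ
  set B : ℝ := ((β : ℝ) + 1) ^ b with hB
  have hB0 : 0 < B := by positivity
  -- rb gap
  have hgap : rb b (β - k₁) + 1 / B ≤ rb b β := by
    have hβ1 : β - k₁ + 1 ≤ β := by omega
    have h1 : rb b (β - k₁) ≤ ∑ n ∈ Finset.range β, 1 / ((n : ℝ) + 1) ^ b := by
      apply Finset.sum_le_sum_of_subset_of_nonneg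
      · exact Finset.range_subset_range.2 hβ1
      · intro i _ _; positivity
    have h2 : rb b β = (∑ n ∈ Finset.range β, 1 / ((n : ℝ) + 1) ^ b) + 1 / B := by
      rw [rb, Finset.sum_range_succ]
    linarith
  -- pow bound
  set x : ℝ := σ₁ / e * (1 / B) * a with hx
  have hx0 : 0 ≤ x := by positivity
  have hax : a = x * (e * B / σ₁) := by
    rw [hx]; field_simp
  have hpow : a ^ k₀ ≤ (k₀.factorial / σ₁ ^ k₀) * e ^ k₀ * B ^ k₀ * Real.exp x := by
    calc a ^ k₀ = x ^ k₀ * (e * B / σ₁) ^ k₀ := by rw [hax, mul_pow]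
      _ ≤ (k₀.factorial * Real.exp x) * (e * B / σ₁) ^ k₀ := by
          exact mul_le_mul_of_nonneg_right (pow_le_factorial_mul_exp hx0 k₀)
            (by positivity)
      _ = (k₀.factorial / σ₁ ^ k₀) * e ^ k₀ * B ^ k₀ * Real.exp x := by
          rw [div_pow, mul_pow]; ring
  -- exp (-k₂ τ.re) ≤ exp (k₂ r)
  have hreexp : Real.exp (-((k₂:ℝ) * τ.re)) ≤ Real.exp ((k₂:ℝ) * r) := by
    apply Real.exp_le_exp.2
    rcases hΩ hτ with h | h
    · simp only [Set.mem_setOf_eq] at h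
      nlinarith [Nat.cast_nonneg (α := ℝ) k₂]
    · simp only [Set.mem_setOf_eq] at h
      have h1 : |τ.re| ≤ a := Complex.abs_re_le_norm τ
      have h2 := neg_abs_le τ.re
      nlinarith [Nat.cast_nonneg (α := ℝ) k₂]
  have hB' : ((β : ℝ) + 1) ^ (b * (k₀ : ℝ)) = B ^ k₀ := by
    rw [hB, ← Real.rpow_natCast (((β:ℝ)+1) ^ b) k₀, ← Real.rpow_mul (by positivity)]
  have habs : ‖τ ^ k₀ * Complex.exp (-(k₂ : ℂ) * τ) * v τ‖
      = a ^ k₀ * Real.exp (-((k₂:ℝ) * τ.re)) * ‖v τ‖ := by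
    simp [ha, map_mul, map_pow, Complex.norm_exp]
  rw [habs, hB']
  have hvτ := hv τ hτ
  have hvnn : 0 ≤ ‖v τ‖ := norm_nonneg _
  calc a ^ k₀ * Real.exp (-((k₂:ℝ) * τ.re)) * ‖v τ‖
      ≤ ((k₀.factorial / σ₁ ^ k₀) * e ^ k₀ * B ^ k₀ * Real.exp x) *
          Real.exp ((k₂:ℝ) * r) *
          (N * a * Real.exp (σ₁ / e * rb b (β - k₁) * a)) := by
        apply mul_le_mul
        · apply mul_le_mul hpow hreexp (Real.exp_nonneg _) (by positivity)
        · exact hvτ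
        · exact hvnn
        · positivity
    _ = ((k₀.factorial / σ₁ ^ k₀) * Real.exp ((k₂:ℝ) * r)) * e ^ k₀ * B ^ k₀ *
          N * a * Real.exp (x + σ₁ / e * rb b (β - k₁) * a) := by
        rw [Real.exp_add]; ring
    _ ≤ ((k₀.factorial / σ₁ ^ k₀) * Real.exp ((k₂:ℝ) * r)) * e ^ k₀ * B ^ k₀ *
          N * a * Real.exp (σ₁ / e * rb b β * a) := by
        gcongr
        have hfac : 0 ≤ σ₁ / e * a := by positivity
        have h1 : x + σ₁ / e * rb b (β - k₁) * a
            = (σ₁ / e * a) * (1 / B + rb b (β - k₁)) := by rw [hx]; ring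
        have h2 : σ₁ / e * rb b β * a = (σ₁ / e * a) * rb b β := by ring
        rw [h1, h2]
        exact mul_le_mul_of_nonneg_left (by linarith) hfac
end

section
/- Let b > 1 and σ₁ > 0 be real numbers and let γ₀, γ₁ ≥ 0 and γ₂ ≥ 1 be integers. Then there exists a constant C > 0, depending only on γ₀, γ₁, γ₂ and σ₁ (independent of ε, β, τ and v), such that for every ε ∈ ℂ with ε ≠ 0, every integer β ≥ γ₂, every real N ≥ 0, every τ ∈ ℂ, and every function v : ℂ → ℂ with u ↦ v(uτ) continuous on [0,1] and satisfying |v(uτ)| ≤ N |uτ| exp((σ₁/|ε|) r_b(β−γ₂) |uτ|) for all u ∈ [0,1], one has |τ| · | ∫_0^1 (τ − uτ)^{γ₀} (uτ)^{γ₁} v(uτ) · τ du | ≤ C |ε|^{γ₀+γ₁+2} (β+1)^{b(γ₀+γ₁+2)} N |τ| exp((σ₁/|ε|) r_b(β) |τ|). -/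
/-- Convolution bound along the segment `[0,τ]`, parametrized by `s = uτ`, `u ∈ [0,1]`.
The constant `C` depends only on `γ₀, γ₁, γ₂, σ₁`; it is independent of `b, ε, β, τ, v`. -/
theorem stmt11 (σ₁ : ℝ) (hσ₁ : 0 < σ₁) (γ₀ γ₁ γ₂ : ℕ) (hγ₂ : 1 ≤ γ₂) :
    ∃ C : ℝ, 0 < C ∧ ∀ b : ℝ, 1 < b →
      ∀ (ε : ℂ), ε ≠ 0 → ∀ β : ℕ, γ₂ ≤ β → ∀ N : ℝ, 0 ≤ N → ∀ τ : ℂ,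
      ∀ v : ℂ → ℂ,
        ContinuousOn (fun u : ℝ => v ((u : ℂ) * τ)) (Set.Icc 0 1) →
        (∀ u : ℝ, u ∈ Set.Icc (0 : ℝ) 1 →
          ‖v ((u : ℂ) * τ)‖ ≤ N * ‖(u : ℂ) * τ‖ *
            Real.exp (σ₁ / ‖ε‖ * rb b (β - γ₂) * ‖(u : ℂ) * τ‖)) →
        ‖τ‖ * ‖∫ u in (0 : ℝ)..1,
            (τ - (u : ℂ) * τ) ^ γ₀ * ((u : ℂ) * τ) ^ γ₁ * v ((u : ℂ) * τ) * τ‖ ≤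
          C * ‖ε‖ ^ (γ₀ + γ₁ + 2) *
            ((β : ℝ) + 1) ^ (b * ((γ₀ + γ₁ + 2 : ℕ) : ℝ)) *
            N * ‖τ‖ *
            Real.exp (σ₁ / ‖ε‖ * rb b β * ‖τ‖) := by
  set k := γ₀ + γ₁ + 2 with hkdef
  refine ⟨((k : ℝ) / σ₁) ^ k, by positivity, ?_⟩
  intro b hb ε hε β hβ N hN τ v hcont hv
  set T := ‖τ‖ with hTdef
  have hT0 : 0 ≤ T := norm_nonneg τ
  set E := ‖ε‖ with hEdef
  have hE0 : 0 < E := norm_pos_iff.2 hε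
  set A' := σ₁ / E * rb b (β - γ₂) with hA'def
  set A := σ₁ / E * rb b β with hAdef
  have hrb_nonneg : ∀ m : ℕ, 0 ≤ rb b m := by
    intro m
    refine Finset.sum_nonneg fun n _ => ?_
    positivity
  have hA'0 : 0 ≤ A' := by
    have := hrb_nonneg (β - γ₂)
    positivity
  have hkpos : (0 : ℝ) < (k : ℝ) := by
    have : 2 ≤ k := by omega
    exact_mod_cast Nat.lt_of_lt_of_le (by norm_num) this
  set P := ((β : ℝ) + 1) ^ b with hPdef
  have hP0 : 0 < P := Real.rpow_pos_of_pos (by positivity) b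
  set δ := σ₁ / (E * P) with hδdef
  have hδ0 : 0 < δ := by positivity
  -- Step 1: pointwise bound and integral bound
  have hint : ‖∫ u in (0 : ℝ)..1,
      (τ - (u : ℂ) * τ) ^ γ₀ * ((u : ℂ) * τ) ^ γ₁ * v ((u : ℂ) * τ) * τ‖ ≤
      T ^ k * (N * Real.exp (A' * T)) := by
    have key : ∀ u ∈ Set.uIoc (0 : ℝ) 1,
        ‖(τ - (u : ℂ) * τ) ^ γ₀ * ((u : ℂ) * τ) ^ γ₁ * v ((u : ℂ) * τ) * τ‖ ≤
        T ^ k * (N * Real.exp (A' * T)) := by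
      intro u hu
      rw [Set.uIoc_of_le zero_le_one] at hu
      have hu' : u ∈ Set.Icc (0 : ℝ) 1 := ⟨hu.1.le, hu.2⟩
      have h2 : ‖(u : ℂ) * τ‖ ≤ T := by
        rw [norm_mul, Complex.norm_real, Real.norm_of_nonneg hu'.1]
        nlinarith [hu'.2, hT0]
      have h1 : ‖τ - (u : ℂ) * τ‖ ≤ T := by
        have heq : τ - (u : ℂ) * τ = ((1 - u : ℝ) : ℂ) * τ := by push_cast; ring
        rw [heq, norm_mul, Complex.norm_real, Real.norm_of_nonneg (by linarith [hu'.2])]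
        nlinarith [hu'.1, hT0]
      have h3 : ‖v ((u : ℂ) * τ)‖ ≤ N * T * Real.exp (A' * T) := by
        calc ‖v ((u : ℂ) * τ)‖
            ≤ N * ‖(u : ℂ) * τ‖ *
              Real.exp (A' * ‖(u : ℂ) * τ‖) := hv u hu'
          _ ≤ N * T * Real.exp (A' * T) := by
              have hexps : Real.exp (A' * ‖(u : ℂ) * τ‖) ≤ Real.exp (A' * T) :=
                Real.exp_le_exp.2 (mul_le_mul_of_nonneg_left h2 hA'0)
              exact mul_le_mul (mul_le_mul_of_nonneg_left h2 hN) hexps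
                (Real.exp_pos _).le (by positivity)
      rw [norm_mul, norm_mul, norm_mul, norm_pow, norm_pow]
      calc ‖τ - (u : ℂ) * τ‖ ^ γ₀ * ‖(u : ℂ) * τ‖ ^ γ₁ *
          ‖v ((u : ℂ) * τ)‖ * ‖τ‖
          ≤ T ^ γ₀ * T ^ γ₁ * (N * T * Real.exp (A' * T)) * T := by
            have h4 : (0:ℝ) ≤ ‖v ((u : ℂ) * τ)‖ := norm_nonneg _
            have h5 : (0:ℝ) ≤ ‖τ - (u : ℂ) * τ‖ := norm_nonneg _
            have h6 : (0:ℝ) ≤ ‖(u : ℂ) * τ‖ := norm_nonneg _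
            gcongr <;> first | exact le_rfl | assumption
        _ = T ^ k * (N * Real.exp (A' * T)) := by rw [hkdef]; ring
    have := intervalIntegral.norm_integral_le_of_norm_le_const key
    simpa using this
  -- Step 2: T^k ≤ (k/δ)^k * exp(δ T)
  have hTk : T ^ k ≤ ((k : ℝ) / δ) ^ k * Real.exp (δ * T) := by
    have h1 : T ≤ (k : ℝ) / δ * Real.exp (δ * T / k) := by
      have hx : δ * T / k ≤ Real.exp (δ * T / k) := by
        have := Real.add_one_le_exp (δ * T / k)
        linarith
      calc T = (k : ℝ) / δ * (δ * T / k) := by field_simp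
        _ ≤ (k : ℝ) / δ * Real.exp (δ * T / k) := by
            apply mul_le_mul_of_nonneg_left hx
            positivity
    calc T ^ k ≤ ((k : ℝ) / δ * Real.exp (δ * T / k)) ^ k := pow_le_pow_left₀ hT0 h1 k
      _ = ((k : ℝ) / δ) ^ k * Real.exp (δ * T) := by
          rw [mul_pow, ← Real.exp_nat_mul]
          congr 2
          field_simp
  -- Step 3: A' + δ ≤ A
  have hAA : A' + δ ≤ A := by
    have hβ1 : 1 ≤ β := le_trans hγ₂ hβ
    have hrbd : rb b (β - γ₂) + 1 / ((β : ℝ) + 1) ^ b ≤ rb b β := by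
      have hsub : β - γ₂ + 1 ≤ β := by omega
      have h1 : rb b (β - γ₂) ≤ ∑ n ∈ Finset.range β, 1 / ((n : ℝ) + 1) ^ b := by
        apply Finset.sum_le_sum_of_subset_of_nonneg
        · exact Finset.range_subset_range.2 hsub
        · intro n _ _; positivity
      have h2 : rb b β = (∑ n ∈ Finset.range β, 1 / ((n : ℝ) + 1) ^ b) +
          1 / ((β : ℝ) + 1) ^ b := Finset.sum_range_succ _ β
      linarith
    have : A' + δ = σ₁ / E * (rb b (β - γ₂) + 1 / P) := by
      rw [hA'def, hδdef]
      field_simp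
    rw [this, hAdef]
    apply mul_le_mul_of_nonneg_left _ (by positivity)
    rw [hPdef]
    exact hrbd
  -- combine
  have hfinal : ((k : ℝ) / δ) ^ k =
      ((k : ℝ) / σ₁) ^ k * E ^ k * ((β : ℝ) + 1) ^ (b * ((k : ℕ) : ℝ)) := by
    have hPk : ((β : ℝ) + 1) ^ (b * ((k : ℕ) : ℝ)) = P ^ k := by
      rw [hPdef, Real.rpow_mul (by positivity), Real.rpow_natCast]
    have hkδ : (k : ℝ) / δ = (k : ℝ) / σ₁ * E * P := by
      rw [hδdef]; field_simp
    rw [hPk, hkδ, mul_pow, mul_pow]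
  calc T * ‖∫ u in (0 : ℝ)..1,
        (τ - (u : ℂ) * τ) ^ γ₀ * ((u : ℂ) * τ) ^ γ₁ * v ((u : ℂ) * τ) * τ‖
      ≤ T * (T ^ k * (N * Real.exp (A' * T))) :=
        mul_le_mul_of_nonneg_left hint hT0
    _ ≤ T * (((k : ℝ) / δ) ^ k * Real.exp (δ * T) * (N * Real.exp (A' * T))) := by
        apply mul_le_mul_of_nonneg_left _ hT0
        apply mul_le_mul_of_nonneg_right hTk
        positivity
    _ = ((k : ℝ) / δ) ^ k * N * T * Real.exp ((A' + δ) * T) := by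
        rw [add_mul, Real.exp_add]; ring
    _ ≤ ((k : ℝ) / δ) ^ k * N * T * Real.exp (A * T) := by
        apply mul_le_mul_of_nonneg_left _ (by positivity)
        exact Real.exp_le_exp.2 (mul_le_mul_of_nonneg_right hAA hT0)
    _ = ((k : ℝ) / σ₁) ^ k * E ^ k * ((β : ℝ) + 1) ^ (b * ((k : ℕ) : ℝ)) *
        N * T * Real.exp (A * T) := by rw [hfinal]
end

section
/- Let b > 1 be a real number, σ₁ > σ₁' > 0 real numbers, and γ₀, γ₁ ≥ 0 integers. Then there exists a constant Č > 0, depending only on γ₀, γ₁, σ₁ and σ₁' (independent of ε, β, τ and v), such that for every ε ∈ ℂ with ε ≠ 0, every integer β ≥ 0, every real N ≥ 0, every τ ∈ ℂ, and every function v : ℂ → ℂ with u ↦ v(uτ) continuous on [0,1] and satisfying |v(uτ)| ≤ N |uτ| exp((σ₁'/|ε|) r_b(β) |uτ|) for all u ∈ [0,1], one has |τ| · | ∫_0^1 (τ − uτ)^{γ₀} (uτ)^{γ₁} v(uτ) · τ du | ≤ Č |ε|^{γ₀+γ₁+2} N |τ| exp((σ₁/|ε|) r_b(β) |τ|). -/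
/-- Convolution bound along the segment `[0,τ]`, parametrized by `s = uτ`, `u ∈ [0,1]`.
The constant `Cc` depends only on `γ₀, γ₁, σ₁, σ₁'`; it is independent of `b, ε, β, τ, v`. -/
theorem stmt12 (σ₁ σ₁' : ℝ) (hσ₁' : 0 < σ₁') (hσ₁ : σ₁' < σ₁) (γ₀ γ₁ : ℕ) :
    ∃ Cc : ℝ, 0 < Cc ∧ ∀ b : ℝ, 1 < b →
      ∀ (ε : ℂ), ε ≠ 0 → ∀ β : ℕ, ∀ N : ℝ, 0 ≤ N → ∀ τ : ℂ,
      ∀ v : ℂ → ℂ,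
        ContinuousOn (fun u : ℝ => v ((u : ℂ) * τ)) (Set.Icc 0 1) →
        (∀ u : ℝ, u ∈ Set.Icc (0 : ℝ) 1 →
          ‖v ((u : ℂ) * τ)‖ ≤ N * ‖(u : ℂ) * τ‖ *
            Real.exp (σ₁' / ‖ε‖ * rb b β * ‖(u : ℂ) * τ‖)) →
        ‖τ‖ * ‖∫ u in (0 : ℝ)..1,
            (τ - (u : ℂ) * τ) ^ γ₀ * ((u : ℂ) * τ) ^ γ₁ * v ((u : ℂ) * τ) * τ‖ ≤
          Cc * ‖ε‖ ^ (γ₀ + γ₁ + 2) * N * ‖τ‖ *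
            Real.exp (σ₁ / ‖ε‖ * rb b β * ‖τ‖) := by
  set m : ℕ := γ₀ + γ₁ + 2 with hm
  have hσ : 0 < σ₁ - σ₁' := by linarith
  refine ⟨(m.factorial : ℝ) / (σ₁ - σ₁') ^ m, by positivity, ?_⟩
  intro b hb ε hε β N hN τ v hcont hv
  set t := ‖τ‖ with htdef
  have ht : 0 ≤ t := norm_nonneg τ
  have hεpos : 0 < ‖ε‖ := norm_pos_iff.mpr hε
  -- rb ≥ 1
  have hrb1 : 1 ≤ rb b β := by
    have h0 := Finset.single_le_sum (f := fun n : ℕ => 1 / ((n : ℝ) + 1) ^ b)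
      (fun i _ => by positivity) (Finset.mem_range_succ_iff.mpr (Nat.zero_le β))
    rw [rb]
    simpa using h0
  have hrb0 : 0 ≤ rb b β := by linarith
  set a := σ₁' / ‖ε‖ * rb b β with hadef
  have ha : 0 ≤ a := by positivity
  set δ := (σ₁ - σ₁') / ‖ε‖ * rb b β with hδdef
  have hδ : 0 < δ := by positivity
  have hA : σ₁ / ‖ε‖ * rb b β = a + δ := by
    rw [hadef, hδdef]; ring
  -- bound on the integral
  have hbound : ‖∫ u in (0 : ℝ)..1,
      (τ - (u : ℂ) * τ) ^ γ₀ * ((u : ℂ) * τ) ^ γ₁ * v ((u : ℂ) * τ) * τ‖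
      ≤ N * t ^ m * Real.exp (a * t) := by
    have := intervalIntegral.norm_integral_le_of_norm_le_const
      (a := (0 : ℝ)) (b := 1) (C := N * t ^ m * Real.exp (a * t))
      (f := fun u : ℝ => (τ - (u : ℂ) * τ) ^ γ₀ * ((u : ℂ) * τ) ^ γ₁ * v ((u : ℂ) * τ) * τ)
      ?_
    · simpa using this
    intro u hu
    rw [Set.uIoc_of_le (by norm_num : (0:ℝ) ≤ 1)] at hu
    have hu0 : 0 ≤ u := le_of_lt hu.1
    have hu1 : u ≤ 1 := hu.2
    have huIcc : u ∈ Set.Icc (0:ℝ) 1 := ⟨hu0, hu1⟩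
    have hut : ‖(u : ℂ) * τ‖ = u * t := by
      rw [norm_mul, Complex.norm_real, Real.norm_of_nonneg hu0]
    have hut_le : ‖(u : ℂ) * τ‖ ≤ t := by
      rw [hut]; nlinarith
    have h1 : ‖τ - (u : ℂ) * τ‖ ≤ t := by
      have : τ - (u : ℂ) * τ = ((1 - u : ℝ) : ℂ) * τ := by push_cast; ring
      rw [this, norm_mul, Complex.norm_real, Real.norm_of_nonneg (by linarith)]
      nlinarith
    have hvu : ‖v ((u : ℂ) * τ)‖ ≤ N * t * Real.exp (a * t) := by
      calc ‖v ((u : ℂ) * τ)‖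
          ≤ N * ‖(u : ℂ) * τ‖ *
            Real.exp (a * ‖(u : ℂ) * τ‖) := hv u huIcc
        _ ≤ N * t * Real.exp (a * t) := by
            gcongr <;> first
              | exact hut_le
              | exact mul_le_mul_of_nonneg_left hut_le ha
    calc ‖(τ - (u : ℂ) * τ) ^ γ₀ * ((u : ℂ) * τ) ^ γ₁ * v ((u : ℂ) * τ) * τ‖
        = ‖τ - (u : ℂ) * τ‖ ^ γ₀ * ‖(u : ℂ) * τ‖ ^ γ₁ *
            ‖v ((u : ℂ) * τ)‖ * t := by
          simp [norm_mul, norm_pow, htdef]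
      _ ≤ t ^ γ₀ * t ^ γ₁ * (N * t * Real.exp (a * t)) * t := by
          gcongr <;> first
            | exact norm_nonneg _
            | exact h1
            | exact hut_le
            | exact hvu
      _ = N * t ^ m * Real.exp (a * t) := by
          rw [hm]; ring
  -- key inequality : t ^ m ≤ Cc * |ε|^m * exp (δ t)
  have hkey : t ^ m ≤ (m.factorial : ℝ) / (σ₁ - σ₁') ^ m * ‖ε‖ ^ m *
      Real.exp (δ * t) := by
    have h1 : (δ * t) ^ m / (m.factorial : ℝ) ≤ Real.exp (δ * t) :=
      Real.pow_div_factorial_le_exp (x := δ * t) (by positivity) m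
    have hδε : (σ₁ - σ₁') / ‖ε‖ ≤ δ := by
      rw [hδdef]
      nlinarith [div_pos hσ hεpos]
    have h2 : ((σ₁ - σ₁') / ‖ε‖) ^ m * t ^ m ≤ (δ * t) ^ m := by
      rw [← mul_pow]
      gcongr <;> first
        | positivity
        | exact mul_le_mul_of_nonneg_right hδε ht
    have h3 : ((σ₁ - σ₁') / ‖ε‖) ^ m * t ^ m ≤
        (m.factorial : ℝ) * Real.exp (δ * t) := by
      calc ((σ₁ - σ₁') / ‖ε‖) ^ m * t ^ m ≤ (δ * t) ^ m := h2
        _ ≤ (m.factorial : ℝ) * Real.exp (δ * t) := by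
            have hf : (0:ℝ) < (m.factorial : ℝ) := by positivity
            rw [div_le_iff₀ hf] at h1
            linarith
    have hpos : (0:ℝ) < ((σ₁ - σ₁') / ‖ε‖) ^ m := by positivity
    rw [← le_div_iff₀' hpos] at h3
    calc t ^ m ≤ (m.factorial : ℝ) * Real.exp (δ * t) /
          ((σ₁ - σ₁') / ‖ε‖) ^ m := h3
      _ = (m.factorial : ℝ) / (σ₁ - σ₁') ^ m * ‖ε‖ ^ m *
          Real.exp (δ * t) := by
          rw [div_pow]
          field_simp
  -- combine
  calc t * ‖∫ u in (0 : ℝ)..1,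
        (τ - (u : ℂ) * τ) ^ γ₀ * ((u : ℂ) * τ) ^ γ₁ * v ((u : ℂ) * τ) * τ‖
      ≤ t * (N * t ^ m * Real.exp (a * t)) := by
        exact mul_le_mul_of_nonneg_left hbound ht
    _ = t ^ m * (N * t * Real.exp (a * t)) := by ring
    _ ≤ ((m.factorial : ℝ) / (σ₁ - σ₁') ^ m * ‖ε‖ ^ m * Real.exp (δ * t)) *
        (N * t * Real.exp (a * t)) := by
        have hnn : 0 ≤ N * t * Real.exp (a * t) := by positivity
        exact mul_le_mul_of_nonneg_right hkey hnn
    _ = (m.factorial : ℝ) / (σ₁ - σ₁') ^ m * ‖ε‖ ^ m * N * t *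
        Real.exp (σ₁ / ‖ε‖ * rb b β * t) := by
        rw [hA, add_mul, Real.exp_add]; ring
end

section
/- Let b > 1 and σ₁ > 0 be real numbers and let γ₀, γ₁ ≥ 0 and γ₂ ≥ 1 be integers. Then there exists a constant C > 0, depending only on γ₀, γ₁, γ₂ and σ₁ (independent of ε, β, τ, c and v), such that the following holds: for every ε ∈ ℂ with ε ≠ 0, every integer β ≥ γ₂, every real N ≥ 0, all τ, c ∈ ℂ with |c| ≤ |τ|, and every function v : ℂ → ℂ with u ↦ v(uc) and u ↦ v((1−u)c + uτ) continuous on [0,1], satisfying |v(s)| ≤ N |s| exp((σ₁/|ε|) r_b(β−γ₂) |s|) at every point s = uc and s = (1−u)c + uτ with u ∈ [0,1], one has |τ| · | c ∫_0^1 (τ − uc)^{γ₀} (uc)^{γ₁} v(uc) du + (τ − c) ∫_0^1 (τ − ((1−u)c + uτ))^{γ₀} ((1−u)c + uτ)^{γ₁} v((1−u)c + uτ) du | ≤ C |ε|^{γ₀+γ₁+2} (β+1)^{b(γ₀+γ₁+2)} N |τ| exp((σ₁/|ε|) r_b(β) |τ|). -/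
lemma rb_nonneg (b : ℝ) (β : ℕ) : 0 ≤ rb b β := by
  apply Finset.sum_nonneg
  intro n _
  positivity

lemma rb_key (b : ℝ) (β γ₂ : ℕ) (h1 : 1 ≤ γ₂) (h2 : γ₂ ≤ β) :
    rb b (β - γ₂) + (((β : ℝ) + 1) ^ b)⁻¹ ≤ rb b β := by
  have hsub : β - γ₂ + 1 ≤ β := by omega
  have h3 : rb b (β - γ₂) ≤ ∑ n ∈ Finset.range β, 1 / ((n : ℝ) + 1) ^ b := by
    apply Finset.sum_le_sum_of_subset_of_nonneg
    · exact Finset.range_subset_range.2 hsub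
    · intro n _ _; positivity
  have h4 : rb b β = ∑ n ∈ Finset.range β, 1 / ((n : ℝ) + 1) ^ b + 1 / ((β : ℝ) + 1) ^ b :=
    Finset.sum_range_succ _ _
  rw [one_div] at h4
  linarith

lemma pow_le_exp_aux (m : ℕ) (a x : ℝ) (ha : 0 < a) (hx : 0 ≤ x) :
    x ^ m ≤ (Nat.factorial m : ℝ) / a ^ m * Real.exp (a * x) := by
  have h := Real.pow_div_factorial_le_exp (x := a*x) (mul_nonneg ha.le hx) m
  rw [mul_pow, div_le_iff₀ (by positivity)] at h
  have hm : (0:ℝ) < (Nat.factorial m : ℝ) := by exact_mod_cast Nat.factorial_pos m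
  rw [div_mul_eq_mul_div, le_div_iff₀ (by positivity)]
  nlinarith [pow_nonneg hx m, pow_pos ha m]

/-- Convolution bound along the piecewise-linear path `L_{0,τ} = [0,c] ∪ [c,τ]` with
`|c| ≤ |τ|`; the two integrals are parametrized by `s = uc` and `s = (1-u)c + uτ`,
`u ∈ [0,1]`.  The constant `C` depends only on `γ₀, γ₁, γ₂, σ₁`; it is independent of
`b, ε, β, τ, c, v`. -/
theorem stmt13 (σ₁ : ℝ) (hσ₁ : 0 < σ₁) (γ₀ γ₁ γ₂ : ℕ) (hγ₂ : 1 ≤ γ₂) :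
    ∃ C : ℝ, 0 < C ∧ ∀ b : ℝ, 1 < b →
      ∀ (ε : ℂ), ε ≠ 0 → ∀ β : ℕ, γ₂ ≤ β → ∀ N : ℝ, 0 ≤ N →
      ∀ τ c : ℂ, ‖c‖ ≤ ‖τ‖ →
      ∀ v : ℂ → ℂ,
        ContinuousOn (fun u : ℝ => v ((u : ℂ) * c)) (Set.Icc 0 1) →
        ContinuousOn (fun u : ℝ => v ((1 - (u : ℂ)) * c + (u : ℂ) * τ)) (Set.Icc 0 1) →
        (∀ u : ℝ, u ∈ Set.Icc (0 : ℝ) 1 →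
          ‖(v ((u : ℂ) * c))‖ ≤ N * ‖((u : ℂ) * c)‖ *
            Real.exp (σ₁ / ‖ε‖ * rb b (β - γ₂) * ‖((u : ℂ) * c)‖)) →
        (∀ u : ℝ, u ∈ Set.Icc (0 : ℝ) 1 →
          ‖(v ((1 - (u : ℂ)) * c + (u : ℂ) * τ))‖ ≤
            N * ‖((1 - (u : ℂ)) * c + (u : ℂ) * τ)‖ *
              Real.exp (σ₁ / ‖ε‖ * rb b (β - γ₂) *
                ‖((1 - (u : ℂ)) * c + (u : ℂ) * τ)‖)) →
        ‖τ‖ * ‖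
            (c * (∫ u in (0 : ℝ)..1,
               (τ - (u : ℂ) * c) ^ γ₀ * ((u : ℂ) * c) ^ γ₁ * v ((u : ℂ) * c))
             + (τ - c) * (∫ u in (0 : ℝ)..1,
               (τ - ((1 - (u : ℂ)) * c + (u : ℂ) * τ)) ^ γ₀ *
                 ((1 - (u : ℂ)) * c + (u : ℂ) * τ) ^ γ₁ *
                 v ((1 - (u : ℂ)) * c + (u : ℂ) * τ)))‖ ≤
          C * ‖ε‖ ^ (γ₀ + γ₁ + 2) *
            ((β : ℝ) + 1) ^ (b * ((γ₀ + γ₁ + 2 : ℕ) : ℝ)) *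
            N * ‖τ‖ *
            Real.exp (σ₁ / ‖ε‖ * rb b β * ‖τ‖) := by
  classical
  set m := γ₀ + γ₁ + 2 with hm
  have hCpos : (0:ℝ) < 3 * 2 ^ γ₀ * (Nat.factorial m : ℝ) / σ₁ ^ m := by
    have : (0:ℝ) < (Nat.factorial m : ℝ) := by exact_mod_cast Nat.factorial_pos m
    positivity
  refine ⟨3 * 2 ^ γ₀ * (Nat.factorial m : ℝ) / σ₁ ^ m, hCpos, ?_⟩
  intro b hb ε hε β hβ N hN τ c hcτ v _ _ hv1 hv2
  set C : ℝ := 3 * 2 ^ γ₀ * (Nat.factorial m : ℝ) / σ₁ ^ m with hC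
  set E := ‖ε‖ with hEdef
  set T := ‖τ‖ with hTdef
  have hE : 0 < E := norm_pos_iff.2 hε
  have hT : 0 ≤ T := norm_nonneg τ
  set A := σ₁ / E * rb b (β - γ₂) with hAdef
  have hA : 0 ≤ A := mul_nonneg (div_nonneg hσ₁.le hE.le) (rb_nonneg _ _)
  -- points on the paths stay within radius T
  have hpt1 : ∀ u : ℝ, u ∈ Set.Icc (0:ℝ) 1 → ‖((u:ℂ)*c)‖ ≤ T := by
    intro u hu
    rw [norm_mul, Complex.norm_real, Real.norm_eq_abs, abs_of_nonneg hu.1]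
    calc u * ‖c‖ ≤ 1 * T := by
          apply mul_le_mul hu.2 hcτ (norm_nonneg c) zero_le_one
      _ = T := one_mul T
  have hpt2 : ∀ u : ℝ, u ∈ Set.Icc (0:ℝ) 1 →
      ‖((1-(u:ℂ))*c + (u:ℂ)*τ)‖ ≤ T := by
    intro u hu
    have h1 : ‖((1-(u:ℂ))*c)‖ = (1-u) * ‖c‖ := by
      rw [norm_mul, show (1 - (u:ℂ)) = ((1-u : ℝ) : ℂ) by push_cast; ring,
        Complex.norm_real, Real.norm_eq_abs, abs_of_nonneg (by linarith [hu.2])]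
    have h2 : ‖((u:ℂ)*τ)‖ = u * T := by
      rw [norm_mul, Complex.norm_real, Real.norm_eq_abs, abs_of_nonneg hu.1]
    calc ‖((1-(u:ℂ))*c + (u:ℂ)*τ)‖
        ≤ ‖((1-(u:ℂ))*c)‖ + ‖((u:ℂ)*τ)‖ := norm_add_le _ _
      _ = (1-u) * ‖c‖ + u * T := by rw [h1, h2]
      _ ≤ T := by nlinarith [hu.1, hu.2, norm_nonneg c, hcτ]
  -- uniform bound on the integrands
  set M := 2 ^ γ₀ * T ^ γ₀ * T ^ γ₁ * (N * T * Real.exp (A*T)) with hMdef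
  have hM : 0 ≤ M := by positivity
  have hbnd : ∀ s : ℂ, ‖s‖ ≤ T →
      ‖(v s)‖ ≤ N * ‖s‖ * Real.exp (A * ‖s‖) →
      ‖((τ - s)^γ₀ * s^γ₁ * v s)‖ ≤ M := by
    intro s hs hvs
    have h1 : ‖(τ - s)‖ ≤ 2 * T := by
      have := norm_sub_le τ s
      rw [← hTdef] at this
      linarith
    have hvs' : ‖(v s)‖ ≤ N * T * Real.exp (A*T) := by
      refine hvs.trans ?_
      have hexp : Real.exp (A * ‖s‖) ≤ Real.exp (A*T) :=
        Real.exp_le_exp.2 (mul_le_mul_of_nonneg_left hs hA)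
      have h3 : N * ‖s‖ ≤ N * T := mul_le_mul_of_nonneg_left hs hN
      exact mul_le_mul h3 hexp (Real.exp_nonneg _) (by positivity)
    rw [norm_mul, norm_mul, norm_pow, norm_pow]
    calc ‖(τ - s)‖ ^ γ₀ * ‖s‖ ^ γ₁ * ‖(v s)‖
        ≤ (2*T)^γ₀ * T^γ₁ * (N * T * Real.exp (A*T)) := by
          gcongr
      _ = M := by rw [hMdef, mul_pow]
  -- bounds on the two integrals
  have hI1 : ‖(∫ u in (0:ℝ)..1,
      (τ - (u:ℂ)*c)^γ₀ * ((u:ℂ)*c)^γ₁ * v ((u:ℂ)*c))‖ ≤ M := by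
    have h := intervalIntegral.norm_integral_le_of_norm_le_const (a := (0:ℝ)) (b := 1)
      (f := fun u : ℝ => (τ - (u:ℂ)*c)^γ₀ * ((u:ℂ)*c)^γ₁ * v ((u:ℂ)*c)) (C := M) ?_
    · simpa using h
    · intro u hu
      rw [Set.uIoc_of_le zero_le_one] at hu
      have hu' : u ∈ Set.Icc (0:ℝ) 1 := ⟨hu.1.le, hu.2⟩
      simpa using hbnd _ (hpt1 u hu') (hv1 u hu')
  have hI2 : ‖(∫ u in (0:ℝ)..1,
      (τ - ((1-(u:ℂ))*c + (u:ℂ)*τ))^γ₀ * ((1-(u:ℂ))*c + (u:ℂ)*τ)^γ₁ *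
        v ((1-(u:ℂ))*c + (u:ℂ)*τ))‖ ≤ M := by
    have h := intervalIntegral.norm_integral_le_of_norm_le_const (a := (0:ℝ)) (b := 1)
      (f := fun u : ℝ => (τ - ((1-(u:ℂ))*c + (u:ℂ)*τ))^γ₀ * ((1-(u:ℂ))*c + (u:ℂ)*τ)^γ₁ *
        v ((1-(u:ℂ))*c + (u:ℂ)*τ)) (C := M) ?_
    · simpa using h
    · intro u hu
      rw [Set.uIoc_of_le zero_le_one] at hu
      have hu' : u ∈ Set.Icc (0:ℝ) 1 := ⟨hu.1.le, hu.2⟩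
      simpa using hbnd _ (hpt2 u hu') (hv2 u hu')
  set I₁ := ∫ u in (0:ℝ)..1, (τ - (u:ℂ)*c)^γ₀ * ((u:ℂ)*c)^γ₁ * v ((u:ℂ)*c) with hI₁def
  set I₂ := ∫ u in (0:ℝ)..1, (τ - ((1-(u:ℂ))*c + (u:ℂ)*τ))^γ₀ * ((1-(u:ℂ))*c + (u:ℂ)*τ)^γ₁ *
      v ((1-(u:ℂ))*c + (u:ℂ)*τ) with hI₂def
  have hsum : ‖(c * I₁ + (τ - c) * I₂)‖ ≤ 3 * T * M := by
    have htc : ‖(τ - c)‖ ≤ 2 * T := by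
      have := norm_sub_le τ c
      rw [← hTdef] at this
      linarith
    have h0 := norm_add_le (c * I₁) ((τ - c) * I₂)
    rw [norm_mul, norm_mul] at h0
    have e1 : ‖c‖ * ‖I₁‖ ≤ T * M :=
      mul_le_mul hcτ hI1 (norm_nonneg _) hT
    have e2 : ‖(τ - c)‖ * ‖I₂‖ ≤ 2 * T * M :=
      mul_le_mul htc hI2 (norm_nonneg _) (by positivity)
    linarith
  -- the key exponential absorption
  set P := ((β:ℝ)+1) ^ b with hPdef
  have hPpos : (0:ℝ) < P := Real.rpow_pos_of_pos (by positivity) b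
  set a := σ₁ / (E * P) with hadef
  have ha : 0 < a := div_pos hσ₁ (mul_pos hE hPpos)
  have hkey : T ^ m ≤ (Nat.factorial m : ℝ) / σ₁ ^ m * (E^m * P^m) * Real.exp (a*T) := by
    have h := pow_le_exp_aux m a T ha hT
    have h2 : (Nat.factorial m : ℝ) / a ^ m
        = (Nat.factorial m : ℝ) / σ₁ ^ m * (E^m * P^m) := by
      rw [hadef, div_pow, div_div_eq_mul_div, mul_pow]
      ring
    rw [h2] at h
    exact h
  have hrpow : ((β:ℝ)+1) ^ (b * ((m:ℕ):ℝ)) = P ^ m := by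
    rw [hPdef, Real.rpow_mul (by positivity), Real.rpow_natCast]
  have hexp : a * T + A * T ≤ σ₁ / E * rb b β * T := by
    have h := rb_key b β γ₂ hγ₂ hβ
    have h2 : a + A ≤ σ₁ / E * rb b β := by
      have ha' : a = σ₁ / E * P⁻¹ := by
        rw [hadef, div_mul_eq_div_div, div_eq_mul_inv]
      rw [ha', hAdef, ← mul_add]
      apply mul_le_mul_of_nonneg_left _ (div_nonneg hσ₁.le hE.le)
      rw [hPdef]
      linarith
    nlinarith
  -- put everything together
  calc T * ‖(c * I₁ + (τ - c) * I₂)‖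
      ≤ T * (3 * T * M) := mul_le_mul_of_nonneg_left hsum hT
    _ = 3 * 2^γ₀ * N * (T ^ m * Real.exp (A*T)) * T := by
        rw [hMdef, hm]; ring
    _ ≤ 3 * 2^γ₀ * N * (((Nat.factorial m : ℝ) / σ₁ ^ m * (E^m * P^m) * Real.exp (a*T))
          * Real.exp (A*T)) * T := by
        gcongr
    _ = C * E ^ m * P ^ m * N * T * Real.exp (a*T + A*T) := by
        rw [Real.exp_add, hC]; ring
    _ ≤ C * E ^ m * P ^ m * N * T * Real.exp (σ₁ / E * rb b β * T) := by
        have hCnn : 0 ≤ C * E ^ m * P ^ m * N * T := by positivity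
        exact mul_le_mul_of_nonneg_left (Real.exp_le_exp.2 hexp) hCnn
    _ = C * E ^ m * ((β:ℝ)+1) ^ (b * ((m:ℕ):ℝ)) * N * T
          * Real.exp (σ₁ / E * rb b β * T) := by rw [hrpow]
end

section
/- Let a > 0, η ∈ (0, π/2) be real numbers and k ∈ ℤ, and let H_k = {z ∈ ℂ : Re z ≤ 0, π/2 + η + 2kπ ≤ Im z ≤ 3π/2 − η + 2kπ}. Then: (i) for every τ ∈ ℂ, |exp(a · exp(−τ))| = exp(a · cos(Im τ) · exp(−Re τ)); (ii) there exist constants Ω > 0, Δ > 0 and K > 0 such that for all τ ∈ H_k, |exp(a · exp(−τ))| ≤ Ω · exp(−a Δ · exp(K |τ|)). In particular the function w(τ) = τ exp(a exp(−τ)) satisfies |w(τ)| ≤ Ω |τ| exp(−a Δ exp(K |τ|)) on H_k. -/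
private lemma sin_ge_aux (η u : ℝ) (hη0 : 0 < η) (hη : η < Real.pi / 2)
    (h1 : η ≤ u) (h2 : u ≤ Real.pi - η) : Real.sin η ≤ Real.sin u := by
  have hmono := Real.strictMonoOn_sin.monotoneOn
  have hπ := Real.pi_pos
  rcases le_or_gt u (Real.pi / 2) with hc | hc
  · exact hmono ⟨by linarith, hη.le⟩ ⟨by linarith, hc⟩ h1
  · rw [← Real.sin_pi_sub u]
    exact hmono ⟨by linarith, hη.le⟩ ⟨by linarith, by linarith⟩ (by linarith)

theorem stmt19 (a η : ℝ) (ha : 0 < a) (hη0 : 0 < η) (hη : η < Real.pi / 2) (k : ℤ) :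
    (∀ τ : ℂ, ‖Complex.exp ((a : ℂ) * Complex.exp (-τ))‖ =
        Real.exp (a * Real.cos τ.im * Real.exp (-τ.re))) ∧
    ∃ Ω Δ K : ℝ, 0 < Ω ∧ 0 < Δ ∧ 0 < K ∧
      (∀ τ : ℂ, τ.re ≤ 0 →
        Real.pi / 2 + η + 2 * (k : ℝ) * Real.pi ≤ τ.im →
        τ.im ≤ 3 * Real.pi / 2 - η + 2 * (k : ℝ) * Real.pi →
        ‖Complex.exp ((a : ℂ) * Complex.exp (-τ))‖ ≤
          Ω * Real.exp (-(a * Δ) * Real.exp (K * ‖τ‖))) ∧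
      (∀ τ : ℂ, τ.re ≤ 0 →
        Real.pi / 2 + η + 2 * (k : ℝ) * Real.pi ≤ τ.im →
        τ.im ≤ 3 * Real.pi / 2 - η + 2 * (k : ℝ) * Real.pi →
        ‖τ * Complex.exp ((a : ℂ) * Complex.exp (-τ))‖ ≤
          Ω * ‖τ‖ * Real.exp (-(a * Δ) * Real.exp (K * ‖τ‖))) := by
  have hπ := Real.pi_pos
  have habs : ∀ τ : ℂ, ‖Complex.exp ((a : ℂ) * Complex.exp (-τ))‖ =
      Real.exp (a * Real.cos τ.im * Real.exp (-τ.re)) := by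
    intro τ
    rw [Complex.norm_exp]
    congr 1
    simp [Complex.exp_re, Real.cos_neg]
    ring
  refine ⟨habs, ?_⟩
  obtain ⟨M, hM⟩ : ∃ M : ℝ, M = 3 * Real.pi / 2 + 2 * Real.pi * |(k : ℝ)| := ⟨_, rfl⟩
  have hM0 : 0 < M := by rw [hM]; positivity
  have key : ∀ τ : ℂ, τ.re ≤ 0 →
      Real.pi / 2 + η + 2 * (k : ℝ) * Real.pi ≤ τ.im →
      τ.im ≤ 3 * Real.pi / 2 - η + 2 * (k : ℝ) * Real.pi →
      ‖Complex.exp ((a : ℂ) * Complex.exp (-τ))‖ ≤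
        1 * Real.exp (-(a * (Real.sin η * Real.exp (-M))) * Real.exp (1 * ‖τ‖)) := by
    intro τ hre hlo hhi
    rw [habs τ, one_mul]
    apply Real.exp_le_exp.2
    -- cos τ.im ≤ - sin η
    have hcos : Real.cos τ.im ≤ - Real.sin η := by
      have hper : Real.cos τ.im = Real.cos (τ.im - (k : ℝ) * (2 * Real.pi)) :=
        (Real.cos_sub_int_mul_two_pi τ.im k).symm
      have : Real.cos (τ.im - (k : ℝ) * (2 * Real.pi)) =
          - Real.sin (τ.im - (k : ℝ) * (2 * Real.pi) - Real.pi / 2) := by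
        rw [show τ.im - (k : ℝ) * (2 * Real.pi) =
          Real.pi / 2 + (τ.im - (k : ℝ) * (2 * Real.pi) - Real.pi / 2) by ring,
          Real.cos_add]
        simp
      rw [hper, this, neg_le_neg_iff]
      exact sin_ge_aux η _ hη0 hη (by linarith) (by linarith)
    -- |τ.im| ≤ M
    have him : |τ.im| ≤ M := by
      rw [abs_le]
      have hk1 : 2 * (k : ℝ) * Real.pi ≤ 2 * Real.pi * |(k : ℝ)| := by
        nlinarith [le_abs_self (k : ℝ)]
      have hk2 : -(2 * Real.pi * |(k : ℝ)|) ≤ 2 * (k : ℝ) * Real.pi := by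
        nlinarith [neg_abs_le (k : ℝ)]
      constructor <;> [linarith [hM]; linarith [hM]]
    -- abs τ ≤ -τ.re + M
    have habsτ : ‖τ‖ ≤ -τ.re + M := by
      calc ‖τ‖ ≤ |τ.re| + |τ.im| := Complex.norm_le_abs_re_add_abs_im τ
        _ ≤ -τ.re + M := by rw [abs_of_nonpos hre]; linarith
    -- exp(-M) * exp(|τ|) ≤ exp(-τ.re)
    have hexp : Real.exp (-M) * Real.exp (1 * ‖τ‖) ≤ Real.exp (-τ.re) := by
      rw [← Real.exp_add]
      exact Real.exp_le_exp.2 (by linarith)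
    have hsη : 0 < Real.sin η := Real.sin_pos_of_pos_of_lt_pi hη0 (by linarith)
    have h1 : a * Real.cos τ.im * Real.exp (-τ.re) ≤
        a * (-Real.sin η) * Real.exp (-τ.re) := by
      have he := Real.exp_pos (-τ.re)
      nlinarith [mul_le_mul_of_nonneg_right hcos he.le]
    have h2 : a * (-Real.sin η) * Real.exp (-τ.re) ≤
        a * (-Real.sin η) * (Real.exp (-M) * Real.exp (1 * ‖τ‖)) := by
      apply mul_le_mul_of_nonpos_left hexp
      nlinarith
    calc a * Real.cos τ.im * Real.exp (-τ.re) ≤ _ := h1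
      _ ≤ _ := h2
      _ = -(a * (Real.sin η * Real.exp (-M))) * Real.exp (1 * ‖τ‖) := by ring
  refine ⟨1, Real.sin η * Real.exp (-M), 1, one_pos,
    mul_pos (Real.sin_pos_of_pos_of_lt_pi hη0 (by linarith)) (Real.exp_pos _), one_pos, key, ?_⟩
  intro τ hre hlo hhi
  rw [norm_mul]
  calc ‖τ‖ * ‖Complex.exp ((a : ℂ) * Complex.exp (-τ))‖
      ≤ ‖τ‖ * (1 * Real.exp (-(a * (Real.sin η * Real.exp (-M))) *
        Real.exp (1 * ‖τ‖))) :=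
        mul_le_mul_of_nonneg_left (key τ hre hlo hhi) (norm_nonneg τ)
    _ = 1 * ‖τ‖ * Real.exp (-(a * (Real.sin η * Real.exp (-M))) *
        Real.exp (1 * ‖τ‖)) := by ring
end
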